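/- Let G₁,…,G_m be real Hilbert spaces, let w₁,…,w_m ∈ (0,1) satisfy Σ_{i=1}^m w_i = 1, and let h_i ∈ Γ₀(G_i) for each i. Define h on the product G = G₁×⋯×G_m by h(y) = Σ_{i=1}^m h_i(y_i), and let h* denote its Fenchel conjugate with respect to the weighted inner product ⟨·,·⟩_{1,G}. Then for every λ > 0 and every y = (y₁,…,y_m) ∈ G, the proximity operator of λh* computed with respect to the weighted norm ‖·‖_{1,G} satisfies prox_{λh*}(y) = ((1/w₁)·prox_{w₁λ h₁*}(w₁y₁), …, (1/w_m)·prox_{w_mλ h_m*}(w_m y_m)), where each prox_{w_iλ h_i*} is computed with respect to the norm of G_i and h_i* is the standard Fenchel conjugate of h_i on G_i. -/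

import Mathlib

open scoped InnerProductSpace BigOperators

/-- `Γ₀(K)`: proper, lower semicontinuous, convex function from `K` to `(-∞, +∞]`. -/
def Gamma0 {K : Type*} [NormedAddCommGroup K] [InnerProductSpace ℝ K]
    (φ : K → EReal) : Prop :=
  (∃ x, φ x ≠ ⊤) ∧ (∀ x, φ x ≠ ⊥) ∧ LowerSemicontinuous φ ∧
    ∀ x y : K, ∀ a b : ℝ, 0 ≤ a → 0 ≤ b → a + b = 1 →
      φ (a • x + b • y) ≤ (a : EReal) * φ x + (b : EReal) * φ y

/-- `IsProx μ φ u p` : `p` is the proximity point `prox_{μφ}(u)`, i.e. `p` minimizes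
`x ↦ (1/2)‖x - u‖² + μ φ(x)` over `K`. -/
def IsProx {K : Type*} [NormedAddCommGroup K] [InnerProductSpace ℝ K]
    (μ : ℝ) (φ : K → EReal) (u p : K) : Prop :=
  ∀ x : K, (((1 / 2 : ℝ) * ‖p - u‖ ^ 2 : ℝ) : EReal) + (μ : EReal) * φ p ≤
    (((1 / 2 : ℝ) * ‖x - u‖ ^ 2 : ℝ) : EReal) + (μ : EReal) * φ x

/-- The standard Fenchel conjugate `φ*(y) = sup_x (⟨x,y⟩ - φ(x))` on a real Hilbert space. -/
noncomputable def fconj {K : Type*} [NormedAddCommGroup K] [InnerProductSpace ℝ K]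
    (φ : K → EReal) (y : K) : EReal :=
  ⨆ x : K, ((⟪x, y⟫_ℝ : ℝ) : EReal) - φ x


@[simp, norm_cast] lemma ereal_coe_sum {ι : Type*} (s : Finset ι) (f : ι → ℝ) :
    ((∑ i ∈ s, f i : ℝ) : EReal) = ∑ i ∈ s, (f i : EReal) :=
  map_sum (⟨⟨Real.toEReal, EReal.coe_zero⟩, EReal.coe_add⟩ : ℝ →+ EReal) f s

lemma ereal_sum_ne_bot {ι : Type*} {s : Finset ι} {f : ι → EReal}
    (hf : ∀ i ∈ s, f i ≠ ⊥) : ∑ i ∈ s, f i ≠ ⊥ := by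
  classical
  induction s using Finset.induction with
  | empty => simp
  | insert a s' hi ih =>
    rw [Finset.sum_insert hi]
    simp only [ne_eq, EReal.add_eq_bot_iff, not_or]
    exact ⟨hf a (Finset.mem_insert_self a s'), ih fun i hi' => hf i (Finset.mem_insert_of_mem hi')⟩

lemma ereal_sum_eq_bot {ι : Type*} {s : Finset ι} {f : ι → EReal} {i : ι} (hi : i ∈ s)
    (h : f i = ⊥) : ∑ j ∈ s, f j = ⊥ := by
  classical
  rw [← Finset.add_sum_erase _ _ hi, h, EReal.bot_add]

lemma ereal_sum_eq_top {ι : Type*} {s : Finset ι} {f : ι → EReal} {i : ι} (hi : i ∈ s)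
    (h : f i = ⊤) (hf : ∀ j ∈ s, f j ≠ ⊥) : ∑ j ∈ s, f j = ⊤ := by
  classical
  rw [← Finset.add_sum_erase _ _ hi, h, EReal.top_add_of_ne_bot]
  exact ereal_sum_ne_bot fun j hj => hf j (Finset.mem_of_mem_erase hj)

lemma ereal_sub_sum {m : ℕ} (a : Fin m → ℝ) (b : Fin m → EReal) (hb : ∀ i, b i ≠ ⊥) :
    ((∑ i, a i : ℝ) : EReal) - ∑ i, b i = ∑ i, (((a i : ℝ) : EReal) - b i) := by
  by_cases htop : ∃ i, b i = ⊤
  · obtain ⟨i, hi⟩ := htop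
    rw [ereal_sum_eq_top (Finset.mem_univ i) hi (fun j _ => hb j)]
    have h1 : ((∑ i, a i : ℝ) : EReal) - ⊤ = ⊥ := by
      rw [sub_eq_add_neg, EReal.neg_top, EReal.add_bot]
    rw [h1]
    symm
    apply ereal_sum_eq_bot (Finset.mem_univ i)
    rw [hi, sub_eq_add_neg, EReal.neg_top, EReal.add_bot]
  · push_neg at htop
    have hbr : ∀ i, b i = (((b i).toReal : ℝ) : EReal) := fun i =>
      (EReal.coe_toReal (htop i) (hb i)).symm
    calc ((∑ i, a i : ℝ) : EReal) - ∑ i, b i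
        = ((∑ i, a i : ℝ) : EReal) - ∑ i, (((b i).toReal : ℝ) : EReal) := by
          congr 1
          exact Finset.sum_congr rfl fun i _ => hbr i
      _ = ((∑ i, (a i - (b i).toReal) : ℝ) : EReal) := by
          rw [← ereal_coe_sum, ← EReal.coe_sub]
          norm_cast
          rw [Finset.sum_sub_distrib]
      _ = ∑ i, (((a i : ℝ) : EReal) - b i) := by
          rw [ereal_coe_sum]
          exact Finset.sum_congr rfl fun i _ => by rw [EReal.coe_sub, ← hbr i]

open scoped InnerProductSpace BigOperators

lemma fconj_ne_bot {K : Type*} [NormedAddCommGroup K] [InnerProductSpace ℝ K]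
    {φ : K → EReal} (hprop : ∃ v, φ v ≠ ⊤) (hbot : ∀ v, φ v ≠ ⊥) (y : K) :
    fconj φ y ≠ ⊥ := by
  obtain ⟨v, hv⟩ := hprop
  have h1 : (((⟪v, y⟫_ℝ - (φ v).toReal : ℝ)) : EReal) ≤ fconj φ y := by
    have : ((⟪v, y⟫_ℝ : ℝ) : EReal) - φ v ≤ fconj φ y := le_iSup (fun x => ((⟪x, y⟫_ℝ : ℝ) : EReal) - φ x) v
    rwa [← EReal.coe_toReal hv (hbot v), ← EReal.coe_sub] at this
  intro hc
  rw [hc, le_bot_iff] at h1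
  exact EReal.coe_ne_bot _ h1

lemma hstar_eq {m : ℕ} (hm : 0 < m) (G : Fin m → Type*) [∀ i, NormedAddCommGroup (G i)]
    [∀ i, InnerProductSpace ℝ (G i)] (w : Fin m → ℝ) (hw0 : ∀ i, 0 < w i)
    (h : ∀ i, G i → EReal) (hprop : ∀ i, ∃ v, h i v ≠ ⊤) (hbot : ∀ i, ∀ v, h i v ≠ ⊥)
    (x : ∀ i, G i) :
    (⨆ z : ∀ i, G i, ((∑ i, w i * ⟪z i, x i⟫_ℝ : ℝ) : EReal) - ∑ i, h i (z i))
      = ∑ i, fconj (h i) (w i • x i) := by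
  classical
  set f : ∀ i, G i → EReal := fun i v => ((⟪v, w i • x i⟫_ℝ : ℝ) : EReal) - h i v with hf
  have hfc : ∀ i, fconj (h i) (w i • x i) = ⨆ v, f i v := fun i => rfl
  -- pointwise identity
  have S_eq : ∀ z : ∀ i, G i,
      ((∑ i, w i * ⟪z i, x i⟫_ℝ : ℝ) : EReal) - ∑ i, h i (z i) = ∑ i, f i (z i) := by
    intro z
    have : ∀ i, w i * ⟪z i, x i⟫_ℝ = ⟪z i, w i • x i⟫_ℝ := fun i => by
      rw [real_inner_smul_right]
    rw [Finset.sum_congr rfl fun i _ => this i]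
    exact ereal_sub_sum _ _ (fun i => hbot i (z i))
  apply le_antisymm
  · -- sup ≤ sum of sups
    apply iSup_le
    intro z
    rw [S_eq z]
    exact Finset.sum_le_sum fun i _ => le_iSup (f i) (z i)
  · -- sum of sups ≤ sup
    set T := ⨆ z : ∀ i, G i, ((∑ i, w i * ⟪z i, x i⟫_ℝ : ℝ) : EReal) - ∑ i, h i (z i) with hT
    choose v₀ hv₀ using hprop
    set e : Fin m → ℝ := fun i => ⟪v₀ i, w i • x i⟫_ℝ - (h i (v₀ i)).toReal with he
    have hfe : ∀ i, f i (v₀ i) = ((e i : ℝ) : EReal) := fun i => by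
      rw [hf, he]
      simp only
      rw [EReal.coe_sub, EReal.coe_toReal (hv₀ i) (hbot i (v₀ i))]
    have hTge : ((∑ i, e i : ℝ) : EReal) ≤ T := by
      have h1 : ((∑ i, w i * ⟪v₀ i, x i⟫_ℝ : ℝ) : EReal) - ∑ i, h i (v₀ i) ≤ T :=
        le_iSup (fun z : ∀ i, G i => ((∑ i, w i * ⟪z i, x i⟫_ℝ : ℝ) : EReal) - ∑ i, h i (z i)) v₀
      rw [S_eq v₀] at h1
      rw [ereal_coe_sum]
      calc ∑ i, ((e i : ℝ) : EReal) = ∑ i, f i (v₀ i) :=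
            Finset.sum_congr rfl fun i _ => (hfe i).symm
        _ ≤ T := h1
    have hTbot : T ≠ ⊥ := by
      intro hc
      rw [hc, le_bot_iff] at hTge
      exact EReal.coe_ne_bot _ hTge
    by_cases hTtop : T = ⊤
    · rw [hTtop]; exact le_top
    set t := T.toReal with ht
    have hTt : T = ((t : ℝ) : EReal) := (EReal.coe_toReal hTtop hTbot).symm
    -- each conjugate is not ⊤
    have hcne : ∀ i, fconj (h i) (w i • x i) ≠ ⊤ := by
      intro i hc
      -- the constant from the other coordinates
      set K := ∑ j ∈ Finset.univ.erase i, e j with hK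
      -- for every v, f i v + K ≤ t
      have hbound : ∀ v : G i, f i v + ((K : ℝ) : EReal) ≤ ((t : ℝ) : EReal) := by
        intro v
        set z := Function.update v₀ i v with hz
        have hsum : ∑ j, f j (z j) = f i v + ((K : ℝ) : EReal) := by
          rw [← Finset.add_sum_erase _ (fun j => f j (z j)) (Finset.mem_univ i)]
          congr 1
          · rw [hz, Function.update_self]
          · rw [hK, ereal_coe_sum]
            apply Finset.sum_congr rfl
            intro j hj
            have hji : j ≠ i := Finset.ne_of_mem_erase hj
            rw [hz, Function.update_of_ne hji, hfe j]
        have h1 : ∑ j, f j (z j) ≤ T := by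
          have := le_iSup (fun z : ∀ i, G i =>
            ((∑ i, w i * ⟪z i, x i⟫_ℝ : ℝ) : EReal) - ∑ i, h i (z i)) z
          rwa [S_eq z] at this
        rw [hsum, ← hTt] at *
        exact hsum ▸ h1
      -- but sup f i = ⊤ gives a contradiction
      have h2 : ((t - K + 1 : ℝ) : EReal) < fconj (h i) (w i • x i) := by
        rw [hc]; exact EReal.coe_lt_top _
      rw [hfc i, lt_iSup_iff] at h2
      obtain ⟨v, hv⟩ := h2
      have h3 : ((t - K + 1 : ℝ) : EReal) + ((K : ℝ) : EReal) ≤ f i v + ((K : ℝ) : EReal) :=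
        add_le_add_left hv.le _
      have h4 := le_trans h3 (hbound v)
      rw [← EReal.coe_add] at h4
      rw [EReal.coe_le_coe_iff] at h4
      linarith
    set c : Fin m → ℝ := fun i => (fconj (h i) (w i • x i)).toReal with hcdef
    have hcc : ∀ i, fconj (h i) (w i • x i) = ((c i : ℝ) : EReal) := fun i =>
      (EReal.coe_toReal (hcne i) (fconj_ne_bot ⟨v₀ i, hv₀ i⟩ (hbot i) (w i • x i))).symm
    have key : ∑ i, c i ≤ t := by
      apply le_of_forall_pos_le_add
      intro ε hε
      set ε' := ε / m with hε'
      have hε'pos : 0 < ε' := div_pos hε (Nat.cast_pos.mpr hm)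
      -- choose near-optimal v
      have hch : ∀ i, ∃ v : G i, ((c i - ε' : ℝ) : EReal) < f i v := by
        intro i
        have : ((c i - ε' : ℝ) : EReal) < fconj (h i) (w i • x i) := by
          rw [hcc i, EReal.coe_lt_coe_iff]
          linarith
        rw [hfc i, lt_iSup_iff] at this
        exact this
      choose v hv using hch
      have hfvne : ∀ i, f i (v i) ≠ ⊥ ∧ f i (v i) ≠ ⊤ := by
        intro i
        constructor
        · intro hcb
          have h5 := hv i
          rw [hcb] at h5
          exact absurd h5 (by simp)
        · intro hct
          have := le_iSup (f i) (v i)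
          rw [← hfc i, hcc i, hct] at this
          exact absurd this (by simp)
      set s : Fin m → ℝ := fun i => (f i (v i)).toReal with hs
      have hsc : ∀ i, f i (v i) = ((s i : ℝ) : EReal) := fun i =>
        (EReal.coe_toReal (hfvne i).2 (hfvne i).1).symm
      have hsi : ∀ i, c i - ε' < s i := by
        intro i
        have := hv i
        rw [hsc i, EReal.coe_lt_coe_iff] at this
        exact this
      have hsum_le : ∑ i, s i ≤ t := by
        have h1 : ∑ i, f i (v i) ≤ T := by
          have := le_iSup (fun z : ∀ i, G i =>
            ((∑ i, w i * ⟪z i, x i⟫_ℝ : ℝ) : EReal) - ∑ i, h i (z i)) v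
          rwa [S_eq v] at this
        rw [Finset.sum_congr rfl (fun i _ => hsc i), ← ereal_coe_sum, hTt,
          EReal.coe_le_coe_iff] at h1
        exact h1
      have : ∑ i, c i ≤ ∑ i, (s i + ε') :=
        Finset.sum_le_sum fun i _ => (by linarith [hsi i])
      rw [Finset.sum_add_distrib, Finset.sum_const, Finset.card_univ, Fintype.card_fin,
        nsmul_eq_mul, hε'] at this
      have hmne : (m : ℝ) ≠ 0 := Nat.cast_ne_zero.mpr hm.ne'
      rw [mul_div_cancel₀ _ hmne] at this
      linarith
    calc ∑ i, fconj (h i) (w i • x i) = ((∑ i, c i : ℝ) : EReal) := by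
          rw [ereal_coe_sum]; exact Finset.sum_congr rfl fun i _ => hcc i
      _ ≤ ((t : ℝ) : EReal) := EReal.coe_le_coe_iff.mpr key
      _ = T := hTt.symm

/-- Let `h(y) = Σᵢ hᵢ(yᵢ)` on `G = G₁ × ⋯ × G_m` and let `h*` be its Fenchel conjugate with
respect to the weighted inner product `⟨x,y⟩_{1,G} = Σᵢ wᵢ ⟨xᵢ,yᵢ⟩`.  Then for every `λ > 0`
the proximity operator of `λ h*` with respect to the weighted norm `‖·‖_{1,G}` satisfies
`prox_{λh*}(y) = ((1/w₁) prox_{w₁λ h₁*}(w₁y₁), …, (1/w_m) prox_{w_mλ h_m*}(w_m y_m))`,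
i.e. the tuple `p` with `pᵢ = (1/wᵢ) qᵢ`, where `qᵢ = prox_{wᵢλ hᵢ*}(wᵢ yᵢ)` (standard prox
on `Gᵢ`), minimizes `x ↦ (1/2)‖x - y‖²_{1,G} + λ h*(x)`. -/
theorem prox_weighted_conj_split {m : ℕ} (G : Fin m → Type*)
    [∀ i, NormedAddCommGroup (G i)] [∀ i, InnerProductSpace ℝ (G i)]
    (w : Fin m → ℝ) (hw : ∀ i, w i ∈ Set.Ioo (0 : ℝ) 1) (hw1 : ∑ i, w i = 1)
    (h : ∀ i, G i → EReal) (hh : ∀ i, Gamma0 (h i))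
    (hstar : (∀ i, G i) → EReal)
    (hhstar : ∀ y : ∀ i, G i,
      hstar y = ⨆ x : ∀ i, G i, ((∑ i, w i * ⟪x i, y i⟫_ℝ : ℝ) : EReal) - ∑ i, h i (x i))
    (lam : ℝ) (hlam : 0 < lam)
    (y q : ∀ i, G i)
    (hq : ∀ i, IsProx (w i * lam) (fconj (h i)) (w i • y i) (q i)) :
    ∀ x : ∀ i, G i,
      (((1 / 2 : ℝ) * ∑ i, w i * ‖(w i)⁻¹ • q i - y i‖ ^ 2 : ℝ) : EReal)
          + (lam : EReal) * hstar (fun i => (w i)⁻¹ • q i) ≤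
        (((1 / 2 : ℝ) * ∑ i, w i * ‖x i - y i‖ ^ 2 : ℝ) : EReal)
          + (lam : EReal) * hstar x := by
  classical
  intro x
  have hm : 0 < m := by
    rcases Nat.eq_zero_or_pos m with h0 | h0
    · subst h0; simp at hw1
    · exact h0
  have hw0 : ∀ i, 0 < w i := fun i => (hw i).1
  have hprop : ∀ i, ∃ v, h i v ≠ ⊤ := fun i => (hh i).1
  have hbot : ∀ i v, h i v ≠ ⊥ := fun i => (hh i).2.1
  have hsx : ∀ u : ∀ i, G i, hstar u = ∑ i, fconj (h i) (w i • u i) := fun u => by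
    rw [hhstar u]; exact hstar_eq hm G w hw0 h hprop hbot u
  have hqp : ∀ i, w i • ((w i)⁻¹ • q i) = q i := fun i => by
    rw [smul_smul, mul_inv_cancel₀ (hw0 i).ne', one_smul]
  rw [hsx, hsx]
  simp only [hqp]
  set A : Fin m → EReal := fun i => fconj (h i) (q i) with hA
  set B : Fin m → EReal := fun i => fconj (h i) (w i • x i) with hB
  have hAbot : ∀ i, A i ≠ ⊥ := fun i => fconj_ne_bot (hprop i) (hbot i) (q i)
  have hBbot : ∀ i, B i ≠ ⊥ := fun i => fconj_ne_bot (hprop i) (hbot i) (w i • x i)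
  by_cases hBtop : ∃ i, B i = ⊤
  · obtain ⟨i, hi⟩ := hBtop
    have h1 : ∑ i, B i = ⊤ := ereal_sum_eq_top (Finset.mem_univ i) hi (fun j _ => hBbot j)
    rw [h1, EReal.coe_mul_top_of_pos hlam, EReal.coe_add_top]
    exact le_top
  · push_neg at hBtop
    have hAtop : ∀ i, A i ≠ ⊤ := by
      intro i hc
      have h1 := hq i (w i • x i)
      rw [show fconj (h i) (q i) = A i from rfl, hc] at h1
      have hwl : (0:ℝ) < w i * lam := mul_pos (hw0 i) hlam
      rw [EReal.coe_mul_top_of_pos hwl, EReal.coe_add_top, top_le_iff] at h1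
      have hb : B i ≠ ⊤ := hBtop i
      rw [show fconj (h i) (w i • x i) = B i from rfl,
        ← EReal.coe_toReal hb (hBbot i), ← EReal.coe_mul, ← EReal.coe_add] at h1
      exact EReal.coe_ne_top _ h1
    set a : Fin m → ℝ := fun i => (A i).toReal with ha
    set b : Fin m → ℝ := fun i => (B i).toReal with hbdef
    have hAc : ∀ i, A i = ((a i : ℝ) : EReal) := fun i =>
      (EReal.coe_toReal (hAtop i) (hAbot i)).symm
    have hBc : ∀ i, B i = ((b i : ℝ) : EReal) := fun i =>
      (EReal.coe_toReal (hBtop i) (hBbot i)).symm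
    -- real inequality per coordinate, from the prox property
    have hR : ∀ i, (1/2:ℝ) * ‖q i - w i • y i‖ ^ 2 + (w i * lam) * a i ≤
        (1/2:ℝ) * ‖w i • x i - w i • y i‖ ^ 2 + (w i * lam) * b i := by
      intro i
      have h1 := hq i (w i • x i)
      rw [show fconj (h i) (q i) = A i from rfl,
        show fconj (h i) (w i • x i) = B i from rfl, hAc i, hBc i] at h1
      exact_mod_cast h1
    have nq : ∀ i, ‖q i - w i • y i‖ = w i * ‖(w i)⁻¹ • q i - y i‖ := by
      intro i
      conv_lhs => rw [← hqp i]
      rw [← smul_sub, norm_smul, Real.norm_eq_abs, abs_of_pos (hw0 i)]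
    have nx : ∀ i, ‖w i • x i - w i • y i‖ = w i * ‖x i - y i‖ := by
      intro i
      rw [← smul_sub, norm_smul, Real.norm_eq_abs, abs_of_pos (hw0 i)]
    have hL : ∀ i ∈ Finset.univ, (1/2:ℝ) * (w i * ‖(w i)⁻¹ • q i - y i‖ ^ 2) + lam * a i ≤
        (1/2:ℝ) * (w i * ‖x i - y i‖ ^ 2) + lam * b i := by
      intro i _
      have h1 := hR i
      rw [nq i, nx i, mul_pow, mul_pow] at h1
      have hwp := hw0 i
      have h2 : w i * ((1/2:ℝ) * (w i * ‖(w i)⁻¹ • q i - y i‖ ^ 2) + lam * a i) ≤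
          w i * ((1/2:ℝ) * (w i * ‖x i - y i‖ ^ 2) + lam * b i) := by nlinarith [h1]
      exact le_of_mul_le_mul_left h2 hwp
    have hsum := Finset.sum_le_sum hL
    rw [Finset.sum_add_distrib, Finset.sum_add_distrib, ← Finset.mul_sum, ← Finset.mul_sum,
      ← Finset.mul_sum, ← Finset.mul_sum] at hsum
    -- convert the EReal goal to a real one
    have e1 : ∑ i, A i = ((∑ i, a i : ℝ) : EReal) := by
      rw [ereal_coe_sum]; exact Finset.sum_congr rfl fun i _ => hAc i
    have e2 : ∑ i, B i = ((∑ i, b i : ℝ) : EReal) := by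
      rw [ereal_coe_sum]; exact Finset.sum_congr rfl fun i _ => hBc i
    rw [e1, e2, ← EReal.coe_mul, ← EReal.coe_mul, ← EReal.coe_add, ← EReal.coe_add,
      EReal.coe_le_coe_iff]
    linarith [hsum]
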